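/- Let E₁ and E₂ be finite-dimensional Euclidean (real inner product) spaces, μ a probability measure on E₁, and f : E₁ × E₂ → ℝ a function such that for every x ∈ E₁, the map y ↦ f(x,y) belongs to F(C,ε) on E₂. Define φ : E₂ → ℝ ∪ {−∞} by e^{−φ(y)} = ∫_{E₁} e^{−f(x,y)} dμ(x). Then, unless φ is identically −∞, φ belongs to F(C,ε) on E₂. -/

import Mathlib

open MeasureTheory Real

/-- The class `F(C,ε)` on a Euclidean space `E`: functions that are `Cε`-Lipschitz
and satisfy `f(y+h) + f(y-h) - 2f(y) ≤ Cε²|h|²` for all `y, h`. -/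
def memF {E : Type*} [NormedAddCommGroup E] (C ε : ℝ) (f : E → ℝ) : Prop :=
  LipschitzWith (C * ε).toNNReal f ∧
    ∀ y h : E, f (y + h) + f (y - h) - 2 * f y ≤ C * ε ^ 2 * ‖h‖ ^ 2

/-- If `μ` is a probability measure on `E₁` and `y ↦ f(x,y)` belongs to `F(C,ε)` for
every `x`, then `φ` defined by `e^{-φ(y)} = ∫ e^{-f(x,y)} dμ(x)` belongs to `F(C,ε)`,
unless `φ ≡ -∞` (i.e. provided the integral is finite somewhere). -/
theorem integrated_memF {E₁ E₂ : Type*}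
    [NormedAddCommGroup E₁] [InnerProductSpace ℝ E₁] [FiniteDimensional ℝ E₁]
    [MeasurableSpace E₁] [BorelSpace E₁]
    [NormedAddCommGroup E₂] [InnerProductSpace ℝ E₂] [FiniteDimensional ℝ E₂]
    (C ε : ℝ) (hC : 0 < C) (hε : ε ∈ Set.Ioc (0 : ℝ) 1)
    (μ : Measure E₁) [IsProbabilityMeasure μ]
    (f : E₁ → E₂ → ℝ) (hmeas : ∀ y, Measurable fun x => f x y)
    (hF : ∀ x, memF C ε (f x))
    (hfin : ∃ y, (∫⁻ x, ENNReal.ofReal (Real.exp (-f x y)) ∂μ) ≠ ⊤) :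
    memF C ε fun y =>
      -Real.log (∫⁻ x, ENNReal.ofReal (Real.exp (-f x y)) ∂μ).toReal := by
  have hCε : 0 ≤ C * ε := mul_nonneg hC.le hε.1.le
  set I : E₂ → ENNReal := fun y => ∫⁻ x, ENNReal.ofReal (Real.exp (-f x y)) ∂μ with hI
  have hmeas' : ∀ y, Measurable fun x => ENNReal.ofReal (Real.exp (-f x y)) := fun y => ((hmeas y).neg.exp).ennreal_ofReal
  -- comparison
  have hcomp : ∀ y z : E₂, I y ≤ ENNReal.ofReal (Real.exp (C * ε * ‖y - z‖)) * I z := by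
    intro y z
    rw [hI]
    simp only
    rw [← lintegral_const_mul _ (hmeas' z)]
    refine lintegral_mono fun x => ?_
    rw [← ENNReal.ofReal_mul (Real.exp_nonneg _), ← Real.exp_add]
    refine ENNReal.ofReal_le_ofReal (Real.exp_le_exp.2 ?_)
    have := (hF x).1.dist_le_mul y z
    rw [Real.coe_toNNReal _ hCε, Real.dist_eq, dist_eq_norm] at this
    have h2 := abs_le.1 this
    linarith [h2.1, h2.2]
  have hfin' : ∀ y, I y ≠ ⊤ := by
    obtain ⟨y₀, hy₀⟩ := hfin
    intro y
    exact ne_top_of_le_ne_top (ENNReal.mul_ne_top ENNReal.ofReal_ne_top hy₀) (hcomp y y₀)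
  have hpos : ∀ y, 0 < I y := by
    intro y
    rw [hI]
    simp only
    rw [lintegral_pos_iff_support (hmeas' y)]
    have : (Function.support fun x => ENNReal.ofReal (Real.exp (-f x y))) = Set.univ := by
      ext x
      simp [Function.support, (Real.exp_pos _).trans_le le_rfl, ENNReal.ofReal_pos.2 (Real.exp_pos _) |>.ne']
    rw [this]
    simp
  have htpos : ∀ y, 0 < (I y).toReal := fun y => ENNReal.toReal_pos (hpos y).ne' (hfin' y)
  -- real comparison
  have hlog : ∀ y z : E₂, Real.log (I y).toReal ≤ C * ε * ‖y - z‖ + Real.log (I z).toReal := by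
    intro y z
    have h1 : (I y).toReal ≤ Real.exp (C * ε * ‖y - z‖) * (I z).toReal := by
      have := (ENNReal.toReal_le_toReal (hfin' y)
        (ENNReal.mul_ne_top ENNReal.ofReal_ne_top (hfin' z))).2 (hcomp y z)
      rwa [ENNReal.toReal_mul, ENNReal.toReal_ofReal (Real.exp_nonneg _)] at this
    calc Real.log (I y).toReal ≤ Real.log (Real.exp (C * ε * ‖y - z‖) * (I z).toReal) :=
          Real.log_le_log (htpos y) h1
      _ = C * ε * ‖y - z‖ + Real.log (I z).toReal := by
          rw [Real.log_mul (Real.exp_ne_zero _) (htpos z).ne', Real.log_exp]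
  constructor
  · refine LipschitzWith.of_dist_le_mul fun y z => ?_
    rw [Real.dist_eq, Real.coe_toNNReal _ hCε, dist_eq_norm]
    rw [abs_sub_le_iff]
    constructor
    · have := hlog z y
      rw [← neg_sub y z, norm_neg] at this
      linarith
    · have := hlog y z
      linarith
  · intro y h
    show -Real.log (I (y+h)).toReal + -Real.log (I (y-h)).toReal - 2 * -Real.log (I y).toReal
      ≤ C * ε ^ 2 * ‖h‖ ^ 2
    set c : ℝ := C * ε ^ 2 * ‖h‖ ^ 2 with hc
    have hc0 : 0 ≤ c := by positivity
    set u : E₁ → ENNReal := fun x => ENNReal.ofReal (Real.exp (-f x (y + h) / 2)) with hu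
    set v : E₁ → ENNReal := fun x => ENNReal.ofReal (Real.exp (-f x (y - h) / 2)) with hv
    have humeas : Measurable u := ((hmeas (y + h)).neg.div_const 2).exp.ennreal_ofReal
    have hvmeas : Measurable v := ((hmeas (y - h)).neg.div_const 2).exp.ennreal_ofReal
    have husq : (∫⁻ x, u x ^ (2 : ℝ) ∂μ) = I (y + h) := by
      refine lintegral_congr fun x => ?_
      rw [hu]
      simp only
      rw [ENNReal.ofReal_rpow_of_pos (Real.exp_pos _)]
      congr 1
      rw [Real.rpow_def_of_pos (Real.exp_pos _), Real.log_exp]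
      congr 1
      ring_nf
    have hvsq : (∫⁻ x, v x ^ (2 : ℝ) ∂μ) = I (y - h) := by
      refine lintegral_congr fun x => ?_
      rw [hv]
      simp only
      rw [ENNReal.ofReal_rpow_of_pos (Real.exp_pos _)]
      congr 1
      rw [Real.rpow_def_of_pos (Real.exp_pos _), Real.log_exp]
      congr 1
      ring_nf
    have hCS : (∫⁻ x, (u * v) x ∂μ) ≤ I (y + h) ^ (1/2 : ℝ) * I (y - h) ^ (1/2 : ℝ) := by
      have := ENNReal.lintegral_mul_le_Lp_mul_Lq μ
        (⟨by norm_num, by norm_num, by norm_num⟩ : Real.HolderConjugate 2 2)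
        humeas.aemeasurable hvmeas.aemeasurable
      rwa [husq, hvsq] at this
    have hlow : ENNReal.ofReal (Real.exp (-(c/2))) * I y ≤ ∫⁻ x, (u * v) x ∂μ := by
      rw [hI]
      simp only
      rw [← lintegral_const_mul _ (hmeas' y)]
      refine lintegral_mono fun x => ?_
      simp only [Pi.mul_apply, hu, hv]
      rw [← ENNReal.ofReal_mul (Real.exp_nonneg _), ← ENNReal.ofReal_mul (Real.exp_nonneg _),
        ← Real.exp_add, ← Real.exp_add]
      refine ENNReal.ofReal_le_ofReal (Real.exp_le_exp.2 ?_)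
      have h2 := (hF x).2 y h
      rw [← hc] at h2
      linarith
    have hchain : ENNReal.ofReal (Real.exp (-(c/2))) * I y
        ≤ I (y + h) ^ (1/2 : ℝ) * I (y - h) ^ (1/2 : ℝ) := hlow.trans hCS
    have hsq : ENNReal.ofReal (Real.exp (-c)) * (I y * I y) ≤ I (y + h) * I (y - h) := by
      have hm := mul_le_mul' hchain hchain
      calc ENNReal.ofReal (Real.exp (-c)) * (I y * I y)
          = (ENNReal.ofReal (Real.exp (-(c/2))) * I y)
            * (ENNReal.ofReal (Real.exp (-(c/2))) * I y) := by
            rw [mul_mul_mul_comm, ← ENNReal.ofReal_mul (Real.exp_nonneg _), ← Real.exp_add]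
            congr 2
            ring_nf
        _ ≤ (I (y + h) ^ (1/2 : ℝ) * I (y - h) ^ (1/2 : ℝ))
            * (I (y + h) ^ (1/2 : ℝ) * I (y - h) ^ (1/2 : ℝ)) := hm
        _ = (I (y + h) ^ (1/2 : ℝ) * I (y + h) ^ (1/2 : ℝ))
            * (I (y - h) ^ (1/2 : ℝ) * I (y - h) ^ (1/2 : ℝ)) := by rw [mul_mul_mul_comm]
        _ = I (y + h) * I (y - h) := by
            rw [← ENNReal.rpow_add _ _ (hpos (y + h)).ne' (hfin' (y + h)),
              ← ENNReal.rpow_add _ _ (hpos (y - h)).ne' (hfin' (y - h))]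
            norm_num
    have hreal : Real.exp (-c) * ((I y).toReal * (I y).toReal)
        ≤ (I (y + h)).toReal * (I (y - h)).toReal := by
      have hL : ENNReal.ofReal (Real.exp (-c)) * (I y * I y) ≠ ⊤ :=
        ENNReal.mul_ne_top ENNReal.ofReal_ne_top (ENNReal.mul_ne_top (hfin' y) (hfin' y))
      have := (ENNReal.toReal_le_toReal hL (ENNReal.mul_ne_top (hfin' (y + h))
        (hfin' (y - h)))).2 hsq
      rwa [ENNReal.toReal_mul, ENNReal.toReal_mul, ENNReal.toReal_mul,
        ENNReal.toReal_ofReal (Real.exp_nonneg _)] at this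
    have hloglhs : Real.log (Real.exp (-c) * ((I y).toReal * (I y).toReal))
        ≤ Real.log ((I (y + h)).toReal * (I (y - h)).toReal) := by
      exact Real.log_le_log (mul_pos (Real.exp_pos _) (mul_pos (htpos y) (htpos y))) hreal
    rw [Real.log_mul (Real.exp_ne_zero _) (mul_pos (htpos y) (htpos y)).ne', Real.log_exp,
      Real.log_mul (htpos y).ne' (htpos y).ne',
      Real.log_mul (htpos (y + h)).ne' (htpos (y - h)).ne'] at hloglhs
    linarith
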